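/- arXiv:2009.07666 — 3 statements merged into one kernel-verified Lean document; each statement's English description precedes it below -/
import Mathlib

section
/- Let q be an odd prime power. In SL(3, F_q), the subgroup S = ⟨u, v, t, a⟩, where u = diag(1,-1,-1), v = diag(-1,1,-1), t has rows (1,0,0),(0,0,1),(0,-1,0), and a has rows (0,1,0),(0,0,1),(1,0,0), is isomorphic to the symmetric group S₄; moreover Q = ⟨u,v⟩ is normal in S and S/Q ≅ S₃. -/
set_option maxHeartbeats 2000000

namespace Stmt7Aux

open Equiv Matrix

def Arow : Fin 3 → Fin 4 → ℤ := ![![1,1,-1,-1], ![1,-1,1,-1], ![1,-1,-1,1]]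

def sgnz (σ : Equiv.Perm (Fin 4)) : ℤ :=
  if ((Finset.univ : Finset (Fin 4 × Fin 4)).filter
      fun p => p.1 < p.2 ∧ σ p.2 < σ p.1).card % 2 = 0 then 1 else -1

def fmat (σ : Equiv.Perm (Fin 4)) : Matrix (Fin 3) (Fin 3) ℤ :=
  Matrix.of fun j k => sgnz σ * ((∑ i : Fin 4, Arow j (σ i) * Arow k i) / 4)

instance decEntry (M : Matrix (Fin 3) (Fin 3) ℤ) (j k : Fin 3) (c : ℤ) : Decidable (M j k = c) :=
  Int.decEq _ _

instance decEntry2 (M N : Matrix (Fin 3) (Fin 3) ℤ) (j k : Fin 3) : Decidable (M j k = N j k) :=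
  Int.decEq _ _

def su : Equiv.Perm (Fin 4) := Equiv.swap 0 1 * Equiv.swap 2 3
def sv : Equiv.Perm (Fin 4) := Equiv.swap 0 2 * Equiv.swap 1 3
def st : Equiv.Perm (Fin 4) :=
  ⟨fun i => ![3,2,0,1] i, fun i => ![2,3,1,0] i, by intro x; fin_cases x <;> rfl,
    by intro x; fin_cases x <;> rfl⟩
def sa : Equiv.Perm (Fin 4) :=
  ⟨fun i => ![0,3,1,2] i, fun i => ![0,2,3,1] i, by intro x; fin_cases x <;> rfl,
    by intro x; fin_cases x <;> rfl⟩

lemma fm_one : ∀ j k, fmat 1 j k = (1 : Matrix (Fin 3) (Fin 3) ℤ) j k := by decide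

lemma fm_one_mat : fmat 1 = 1 := Matrix.ext fm_one

lemma gmul_t : ∀ τ : Equiv.Perm (Fin 4), ∀ j k,
    fmat (st * τ) j k = ∑ l : Fin 3, fmat st j l * fmat τ l k := by decide

lemma gmul_a : ∀ τ : Equiv.Perm (Fin 4), ∀ j k,
    fmat (sa * τ) j k = ∑ l : Fin 3, fmat sa j l * fmat τ l k := by decide

lemma fm_range : ∀ σ : Equiv.Perm (Fin 4), ∀ j k,
    fmat σ j k = -1 ∨ fmat σ j k = 0 ∨ fmat σ j k = 1 := by decide

lemma one_range : ∀ j k : Fin 3, (1 : Matrix (Fin 3) (Fin 3) ℤ) j k = -1 ∨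
    (1 : Matrix (Fin 3) (Fin 3) ℤ) j k = 0 ∨ (1 : Matrix (Fin 3) (Fin 3) ℤ) j k = 1 := by decide

lemma fm_det_aux : ∀ σ : Equiv.Perm (Fin 4),
    fmat σ 0 0 * fmat σ 1 1 * fmat σ 2 2 - fmat σ 0 0 * fmat σ 1 2 * fmat σ 2 1 -
      fmat σ 0 1 * fmat σ 1 0 * fmat σ 2 2 + fmat σ 0 1 * fmat σ 1 2 * fmat σ 2 0 +
      fmat σ 0 2 * fmat σ 1 0 * fmat σ 2 1 - fmat σ 0 2 * fmat σ 1 1 * fmat σ 2 0 = 1 := by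
  decide

lemma fm_det (σ : Equiv.Perm (Fin 4)) : (fmat σ).det = 1 := by
  rw [Matrix.det_fin_three]; exact fm_det_aux σ

lemma fm_su : ∀ j k, fmat su j k = !![(1:ℤ),0,0; 0,-1,0; 0,0,-1] j k := by decide
lemma fm_sv : ∀ j k, fmat sv j k = !![(-1:ℤ),0,0; 0,1,0; 0,0,-1] j k := by decide
lemma fm_st : ∀ j k, fmat st j k = !![(1:ℤ),0,0; 0,0,1; 0,-1,0] j k := by decide
lemma fm_sa : ∀ j k, fmat sa j k = !![(0:ℤ),1,0; 0,0,1; 1,0,0] j k := by decide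

lemma fm_ker : ∀ σ : Equiv.Perm (Fin 4),
    (∀ j k, fmat σ j k = (1 : Matrix (Fin 3) (Fin 3) ℤ) j k) →
      ∀ i, σ i = (1 : Equiv.Perm (Fin 4)) i := by decide

-- every transposition of `Fin 4` is a positive word in `st`, `sa`
lemma swap_words : ∀ x y : Fin 4, x ≠ y →
    (∀ i, Equiv.swap x y i = (sa * st * st * st * sa) i) ∨
    (∀ i, Equiv.swap x y i = (sa * st) i) ∨
    (∀ i, Equiv.swap x y i = (st * sa) i) ∨
    (∀ i, Equiv.swap x y i = (st * st * sa * sa * st) i) ∨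
    (∀ i, Equiv.swap x y i = (st * sa * sa * st * st) i) ∨
    (∀ i, Equiv.swap x y i = (st * sa * sa * st * st * sa) i) := by decide

lemma mclosure_top : Submonoid.closure ({st, sa} : Set (Equiv.Perm (Fin 4))) = ⊤ := by
  have ht : st ∈ Submonoid.closure ({st, sa} : Set (Equiv.Perm (Fin 4))) :=
    Submonoid.subset_closure (by simp)
  have ha : sa ∈ Submonoid.closure ({st, sa} : Set (Equiv.Perm (Fin 4))) :=
    Submonoid.subset_closure (by simp)
  rw [eq_top_iff, ← Equiv.Perm.mclosure_isSwap, Submonoid.closure_le]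
  rintro σ ⟨x, y, hxy, rfl⟩
  rcases swap_words x y hxy with h | h | h | h | h | h <;> rw [Equiv.ext h] <;>
    solve_by_elim (maxDepth := 20) [Submonoid.mul_mem]

lemma fm_mul (σ τ : Equiv.Perm (Fin 4)) : fmat (σ * τ) = fmat σ * fmat τ := by
  have key : ∀ s ∈ Submonoid.closure ({st, sa} : Set (Equiv.Perm (Fin 4))),
      ∀ τ, fmat (s * τ) = fmat s * fmat τ := by
    intro s hs
    induction hs using Submonoid.closure_induction with
    | mem g hg =>
      rcases hg with rfl | rfl
      · exact fun τ => Matrix.ext fun j k => (gmul_t τ j k).trans (Matrix.mul_apply).symm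
      · exact fun τ => Matrix.ext fun j k => (gmul_a τ j k).trans (Matrix.mul_apply).symm
    | one => intro τ; rw [one_mul, fm_one_mat, Matrix.one_mul]
    | mul s s' _ _ ihs ihs' =>
      intro τ
      rw [mul_assoc, ihs, ihs', ← Matrix.mul_assoc, ← ihs s']
  exact key σ (by rw [mclosure_top]; trivial) τ

-- the projection onto S₃ (action on the three pairings of {0,1,2,3})
def pairIdx : Fin 4 → Fin 4 → Fin 3 :=
  fun x y => ![![0,0,1,2], ![0,0,2,1], ![1,2,0,0], ![2,1,0,0]] x y

def pfun (σ : Equiv.Perm (Fin 4)) : Fin 3 → Fin 3 := fun k => pairIdx (σ 0) (σ k.succ)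

lemma pinj : ∀ σ : Equiv.Perm (Fin 4), ∀ a b, pfun σ a = pfun σ b → a = b := by decide

lemma pbij (σ : Equiv.Perm (Fin 4)) : Function.Bijective (pfun σ) :=
  (Fintype.bijective_iff_injective_and_card _).mpr ⟨pinj σ, rfl⟩

noncomputable def pperm (σ : Equiv.Perm (Fin 4)) : Equiv.Perm (Fin 3) :=
  Equiv.ofBijective _ (pbij σ)

lemma pperm_apply (σ : Equiv.Perm (Fin 4)) (k : Fin 3) : pperm σ k = pfun σ k := rfl

lemma pfun_one : ∀ k : Fin 3, pfun 1 k = k := by decide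

lemma pmul_t : ∀ τ : Equiv.Perm (Fin 4), ∀ k, pfun (st * τ) k = pfun st (pfun τ k) := by decide
lemma pmul_a : ∀ τ : Equiv.Perm (Fin 4), ∀ k, pfun (sa * τ) k = pfun sa (pfun τ k) := by decide

lemma pfun_mul (σ τ : Equiv.Perm (Fin 4)) (k : Fin 3) : pfun (σ * τ) k = pfun σ (pfun τ k) := by
  have key : ∀ s ∈ Submonoid.closure ({st, sa} : Set (Equiv.Perm (Fin 4))),
      ∀ τ k, pfun (s * τ) k = pfun s (pfun τ k) := by
    intro s hs
    induction hs using Submonoid.closure_induction with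
    | mem g hg =>
      rcases hg with rfl | rfl
      · exact pmul_t
      · exact pmul_a
    | one => intro τ k; rw [one_mul, pfun_one]
    | mul s s' _ _ ihs ihs' =>
      intro τ k
      rw [mul_assoc, ihs, ihs', ← ihs s']
  exact key σ (by rw [mclosure_top]; trivial) τ k

noncomputable def P : Equiv.Perm (Fin 4) →* Equiv.Perm (Fin 3) where
  toFun := pperm
  map_one' := Equiv.ext fun k => pfun_one k
  map_mul' σ τ := Equiv.ext fun k => by
    simp only [Equiv.Perm.coe_mul, Function.comp_apply, pperm_apply]
    exact pfun_mul σ τ k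

lemma psw12 : ∀ k, pfun st k = Equiv.swap (1 : Fin 3) 2 k := by decide
lemma psw01 : ∀ k, pfun (st * sa) k = Equiv.swap (0 : Fin 3) 1 k := by decide
lemma psw02 : ∀ k, pfun (sa * st) k = Equiv.swap (0 : Fin 3) 2 k := by decide

lemma swap3_words : ∀ x y : Fin 3, x ≠ y →
    (∀ k, Equiv.swap x y k = pfun st k) ∨ (∀ k, Equiv.swap x y k = pfun (st * sa) k) ∨
      (∀ k, Equiv.swap x y k = pfun (sa * st) k) := by decide

lemma P_surj : Function.Surjective P := by
  have hr : ∀ y : Equiv.Perm (Fin 3), y ∈ P.range := by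
    have htop : Subgroup.closure {σ : Equiv.Perm (Fin 3) | σ.IsSwap} = ⊤ :=
      Equiv.Perm.closure_isSwap
    intro y
    have hy : y ∈ (⊤ : Subgroup (Equiv.Perm (Fin 3))) := trivial
    rw [← htop] at hy
    refine Subgroup.closure_le (K := P.range) |>.mpr ?_ hy
    rintro σ ⟨x, z, hxz, rfl⟩
    rcases swap3_words x z hxz with h | h | h
    · exact ⟨st, (Equiv.ext h).symm⟩
    · exact ⟨st * sa, (Equiv.ext h).symm⟩
    · exact ⟨sa * st, (Equiv.ext h).symm⟩
  intro y
  obtain ⟨σ, hσ⟩ := hr y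
  exact ⟨σ, hσ⟩

lemma ker_aux : ∀ σ : Equiv.Perm (Fin 4), (∀ k, pfun σ k = k) →
    (∀ i, σ i = (1 : Equiv.Perm (Fin 4)) i) ∨ (∀ i, σ i = su i) ∨ (∀ i, σ i = sv i) ∨
      (∀ i, σ i = (su * sv) i) := by decide

lemma su_ker : ∀ k, pfun su k = k := by decide
lemma sv_ker : ∀ k, pfun sv k = k := by decide

lemma ker_P : P.ker = Subgroup.closure {su, sv} := by
  apply le_antisymm
  · intro σ hσ
    rw [MonoidHom.mem_ker] at hσ
    have h : ∀ k, pfun σ k = k := fun k => by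
      have h2 := congrArg (fun e : Equiv.Perm (Fin 3) => e k) hσ
      simpa [P, pperm_apply] using h2
    rcases ker_aux σ h with h' | h' | h' | h'
    · rw [Equiv.ext h']; exact Subgroup.one_mem _
    · rw [Equiv.ext h']; exact Subgroup.subset_closure (by simp)
    · rw [Equiv.ext h']; exact Subgroup.subset_closure (by simp)
    · rw [Equiv.ext h']
      exact Subgroup.mul_mem _ (Subgroup.subset_closure (by simp))
        (Subgroup.subset_closure (by simp))
  · rw [Subgroup.closure_le]
    rintro σ (rfl | rfl)
    · show pperm su = 1
      exact Equiv.ext su_ker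
    · show pperm sv = 1
      exact Equiv.ext sv_ker

-- words in the four generators for the six transpositions of `Fin 4`
lemma swap_words4 : ∀ x y : Fin 4, x ≠ y →
    (∀ i, Equiv.swap x y i = (sv * st) i) ∨ (∀ i, Equiv.swap x y i = (sa * st) i) ∨
    (∀ i, Equiv.swap x y i = (st * sa) i) ∨ (∀ i, Equiv.swap x y i = (st * sv * sa) i) ∨
    (∀ i, Equiv.swap x y i = (sv * sa * st) i) ∨ (∀ i, Equiv.swap x y i = (st * sv) i) := by
  decide

lemma top_eq_closure :
    (⊤ : Subgroup (Equiv.Perm (Fin 4))) = Subgroup.closure {su, sv, st, sa} := by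
  have hsu : su ∈ Subgroup.closure {su, sv, st, sa} := Subgroup.subset_closure (by simp)
  have hsv : sv ∈ Subgroup.closure {su, sv, st, sa} := Subgroup.subset_closure (by simp)
  have hst : st ∈ Subgroup.closure {su, sv, st, sa} := Subgroup.subset_closure (by simp)
  have hsa : sa ∈ Subgroup.closure {su, sv, st, sa} := Subgroup.subset_closure (by simp)
  rw [eq_comm, ← top_le_iff, ← Equiv.Perm.closure_isSwap, Subgroup.closure_le]
  rintro σ ⟨x, y, hxy, rfl⟩
  rcases swap_words4 x y hxy with h | h | h | h | h | h <;> rw [Equiv.ext h] <;>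
    solve_by_elim (maxDepth := 20) [Subgroup.mul_mem]

end Stmt7Aux

open Stmt7Aux in
/-- S = ⟨u,v,t,a⟩ ≅ S₄, Q = ⟨u,v⟩ is normal in S, and S/Q ≅ S₃ (expressed via a
surjective homomorphism S → S₃ with kernel Q). -/
theorem stmt_7 (F : Type) [Field F] [Fintype F] (hq : Odd (Fintype.card F))
    (u v t a : Matrix.SpecialLinearGroup (Fin 3) F)
    (hu : (u : Matrix (Fin 3) (Fin 3) F) = !![1,0,0; 0,-1,0; 0,0,-1])
    (hv : (v : Matrix (Fin 3) (Fin 3) F) = !![-1,0,0; 0,1,0; 0,0,-1])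
    (ht : (t : Matrix (Fin 3) (Fin 3) F) = !![1,0,0; 0,0,1; 0,-1,0])
    (ha : (a : Matrix (Fin 3) (Fin 3) F) = !![0,1,0; 0,0,1; 1,0,0]) :
    Nonempty ((Subgroup.closure {u, v, t, a} :
        Subgroup (Matrix.SpecialLinearGroup (Fin 3) F)) ≃* Equiv.Perm (Fin 4)) ∧
    (Subgroup.closure {u, v} : Subgroup (Matrix.SpecialLinearGroup (Fin 3) F)) ≤
      Subgroup.closure {u, v, t, a} ∧
    ((Subgroup.closure {u, v}).subgroupOf (Subgroup.closure {u, v, t, a})).Normal ∧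
    ∃ φ : (Subgroup.closure {u, v, t, a} :
        Subgroup (Matrix.SpecialLinearGroup (Fin 3) F)) →* Equiv.Perm (Fin 3),
      Function.Surjective φ ∧
      φ.ker = (Subgroup.closure {u, v}).subgroupOf (Subgroup.closure {u, v, t, a}) := by
  classical
  have hchar : ringChar F ≠ 2 := by
    intro h
    have h0 := FiniteField.even_card_iff_char_two.mp h
    have h1 := Nat.odd_iff.mp hq
    omega
  have hm1 : (-1 : F) ≠ 1 := Ring.neg_one_ne_one_of_char_ne_two hchar
  have h10 : (1 : F) ≠ 0 := one_ne_zero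
  have hcast : ∀ x y : ℤ, (x = -1 ∨ x = 0 ∨ x = 1) → (y = -1 ∨ y = 0 ∨ y = 1) →
      ((x : F) = (y : F)) → x = y := by
    rintro x y (rfl | rfl | rfl) (rfl | rfl | rfl) h <;> push_cast at h <;>
      first
        | rfl
        | exact absurd h hm1
        | exact absurd h.symm hm1
        | exact absurd (neg_eq_zero.mp h) h10
        | exact absurd (neg_eq_zero.mp h.symm) h10
        | exact absurd h h10
        | exact absurd h.symm h10
  -- the homomorphism Perm (Fin 4) →* SL(3, F)
  let Φ : Equiv.Perm (Fin 4) →* Matrix.SpecialLinearGroup (Fin 3) F :=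
    { toFun := fun σ => ⟨(fmat σ).map (Int.castRingHom F), by
        have hd := (Int.castRingHom F).map_det (fmat σ)
        rw [fm_det, map_one, RingHom.mapMatrix_apply] at hd
        exact hd.symm⟩,
      map_one' := Subtype.ext (by
        show (fmat 1).map (Int.castRingHom F) = (1 : Matrix (Fin 3) (Fin 3) F)
        rw [fm_one_mat, Matrix.map_one _ (map_zero _) (map_one _)]),
      map_mul' := fun σ τ => Subtype.ext (by
        show (fmat (σ * τ)).map (Int.castRingHom F) =
          ((fmat σ).map (Int.castRingHom F)) * ((fmat τ).map (Int.castRingHom F))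
        rw [fm_mul, Matrix.map_mul]) }
  have coeΦ : ∀ σ, (Φ σ : Matrix (Fin 3) (Fin 3) F) = (fmat σ).map (Int.castRingHom F) :=
    fun σ => rfl
  have hΦu : Φ su = u := by
    apply Subtype.ext
    rw [coeΦ, hu, Matrix.ext fm_su]
    ext i j
    fin_cases i <;> fin_cases j <;> simp [Matrix.map_apply, Matrix.cons_val_zero, Matrix.cons_val_one, Matrix.head_cons, Matrix.cons_val', Matrix.empty_val', Matrix.cons_val_fin_one, Matrix.head_fin_const, Matrix.vecHead, Matrix.vecTail]
  have hΦv : Φ sv = v := by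
    apply Subtype.ext
    rw [coeΦ, hv, Matrix.ext fm_sv]
    ext i j
    fin_cases i <;> fin_cases j <;> simp [Matrix.map_apply, Matrix.cons_val_zero, Matrix.cons_val_one, Matrix.head_cons, Matrix.cons_val', Matrix.empty_val', Matrix.cons_val_fin_one, Matrix.head_fin_const, Matrix.vecHead, Matrix.vecTail]
  have hΦt : Φ st = t := by
    apply Subtype.ext
    rw [coeΦ, ht, Matrix.ext fm_st]
    ext i j
    fin_cases i <;> fin_cases j <;> simp [Matrix.map_apply, Matrix.cons_val_zero, Matrix.cons_val_one, Matrix.head_cons, Matrix.cons_val', Matrix.empty_val', Matrix.cons_val_fin_one, Matrix.head_fin_const, Matrix.vecHead, Matrix.vecTail]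
  have hΦa : Φ sa = a := by
    apply Subtype.ext
    rw [coeΦ, ha, Matrix.ext fm_sa]
    ext i j
    fin_cases i <;> fin_cases j <;> simp [Matrix.map_apply, Matrix.cons_val_zero, Matrix.cons_val_one, Matrix.head_cons, Matrix.cons_val', Matrix.empty_val', Matrix.cons_val_fin_one, Matrix.head_fin_const, Matrix.vecHead, Matrix.vecTail]
  have hΦinj : Function.Injective Φ := by
    rw [injective_iff_map_eq_one]
    intro σ hσ
    have h' : ∀ j k, ((fmat σ j k : ℤ) : F) = (((1 : Matrix (Fin 3) (Fin 3) ℤ) j k : ℤ) : F) := by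
      intro j k
      have h2 := congrArg
        (fun x : Matrix.SpecialLinearGroup (Fin 3) F => (x : Matrix (Fin 3) (Fin 3) F) j k) hσ
      simp only [coeΦ] at h2
      rw [Matrix.map_apply, Matrix.SpecialLinearGroup.coe_one] at h2
      have h3 : ((fmat σ j k : ℤ) : F) = (1 : Matrix (Fin 3) (Fin 3) F) j k := h2
      rw [h3]
      by_cases hjk : j = k <;> simp [Matrix.one_apply, hjk]
    exact Equiv.ext (fm_ker σ fun j k =>
      hcast _ _ (fm_range σ j k) (one_range j k) (h' j k))
  have hrange : Φ.range = Subgroup.closure {u, v, t, a} := by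
    rw [MonoidHom.range_eq_map, top_eq_closure, MonoidHom.map_closure]
    congr 1
    rw [Set.image_insert_eq, Set.image_insert_eq, Set.image_insert_eq, Set.image_singleton,
      hΦu, hΦv, hΦt, hΦa]
  let e : (Subgroup.closure {u, v, t, a} :
      Subgroup (Matrix.SpecialLinearGroup (Fin 3) F)) ≃* Equiv.Perm (Fin 4) :=
    ((MonoidHom.ofInjective hΦinj).trans (MulEquiv.subgroupCongr hrange)).symm
  have he : ∀ x, Φ (e x) = (x : Matrix.SpecialLinearGroup (Fin 3) F) := by
    intro x
    have h1 : ((e.symm (e x) : (Subgroup.closure {u, v, t, a} :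
        Subgroup (Matrix.SpecialLinearGroup (Fin 3) F))) :
        Matrix.SpecialLinearGroup (Fin 3) F) = Φ (e x) := by
      show ((MulEquiv.subgroupCongr hrange (MonoidHom.ofInjective hΦinj (e x)) :
        (Subgroup.closure {u, v, t, a} : Subgroup _)) : Matrix.SpecialLinearGroup (Fin 3) F)
        = Φ (e x)
      rw [MulEquiv.subgroupCongr_apply]
      exact MonoidHom.ofInjective_apply hΦinj
    rw [← h1, MulEquiv.symm_apply_apply]
  have hQ : (Subgroup.closure {u, v} : Subgroup (Matrix.SpecialLinearGroup (Fin 3) F)) =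
      Subgroup.map Φ (Subgroup.closure {su, sv}) := by
    rw [MonoidHom.map_closure, Set.image_insert_eq, Set.image_singleton, hΦu, hΦv]
  let φ := P.comp e.toMonoidHom
  have hφsurj : Function.Surjective φ := P_surj.comp e.surjective
  have hker : φ.ker =
      (Subgroup.closure {u, v}).subgroupOf (Subgroup.closure {u, v, t, a}) := by
    ext x
    simp only [φ, MonoidHom.mem_ker, MonoidHom.comp_apply, Subgroup.mem_subgroupOf,
      MulEquiv.coe_toMonoidHom]
    constructor
    · intro hx
      have hx' : e x ∈ P.ker := hx
      rw [ker_P] at hx'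
      rw [hQ]
      exact Subgroup.mem_map.mpr ⟨e x, hx', he x⟩
    · intro hx
      rw [hQ] at hx
      obtain ⟨y, hy, hyx⟩ := Subgroup.mem_map.mp hx
      have hyex : y = e x := hΦinj (by rw [hyx, he x])
      have hx' : e x ∈ P.ker := by rw [ker_P, ← hyex]; exact hy
      exact hx'
  refine ⟨⟨e⟩, Subgroup.closure_mono ?_, ?_, φ, hφsurj, hker⟩
  · intro x hx
    rcases hx with rfl | hx
    · exact Set.mem_insert _ _
    · rcases hx with rfl
      exact Set.mem_insert_of_mem _ (Set.mem_insert _ _)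
  · rw [← hker]
    exact φ.normal_ker
end

section
/- The automorphism group of the semi-dihedral group SD_{2^m} of order 2^m (m ≥ 4) is a 2-group. -/
/-- The defining relators of the semi-dihedral group
⟨r, s | r^(2^(m-1)) = s² = 1, s r s = r^(2^(m-2) - 1)⟩, with r = of 0 and s = of 1. -/
def semidihedralRels (m : ℕ) : Set (FreeGroup (Fin 2)) :=
  {(FreeGroup.of 0) ^ (2 ^ (m - 1)),
   (FreeGroup.of 1) ^ 2,
   FreeGroup.of 1 * FreeGroup.of 0 * FreeGroup.of 1 * ((FreeGroup.of 0)⁻¹) ^ (2 ^ (m - 2) - 1)}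

/-- The semi-dihedral group of order 2^m, given by its presentation. -/
def SemidihedralGroup (m : ℕ) : Type := PresentedGroup (semidihedralRels m)

instance (m : ℕ) : Group (SemidihedralGroup m) :=
  inferInstanceAs (Group (PresentedGroup (semidihedralRels m)))


namespace SDAux

/-- Concrete model of the semidihedral group of order `2^(j+4)`. -/
@[ext]
structure SDG (j : ℕ) where
  a : ZMod (2 ^ (j + 3))
  e : ZMod 2

namespace SDG

variable {j : ℕ}

instance : NeZero (2 ^ (j + 3)) := ⟨by positivity⟩

instance : Fact (1 < 2 ^ (j + 3)) := ⟨by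
  calc 1 < 2 ^ 3 := by norm_num
  _ ≤ 2 ^ (j + 3) := Nat.pow_le_pow_right (by norm_num) (by omega)⟩

/-- The twisting constant `2^(j+2) - 1`. -/
def kk (j : ℕ) : ZMod (2 ^ (j + 3)) := 2 ^ (j + 2) - 1

lemma two_pow_j3 : (2 : ZMod (2 ^ (j + 3))) ^ (j + 3) = 0 := by
  have := ZMod.natCast_self (2 ^ (j + 3))
  push_cast at this
  exact this

lemma kk_sq : kk j ^ 2 = 1 := by
  have h := two_pow_j3 (j := j)
  unfold kk
  linear_combination ((2 : ZMod (2 ^ (j + 3))) ^ (j + 1) - 1) * h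

lemma zmod2_cases (e : ZMod 2) : e = 0 ∨ e = 1 := by revert e; decide

instance : Mul (SDG j) := ⟨fun x y => ⟨x.a + kk j ^ x.e.val * y.a, x.e + y.e⟩⟩
instance : One (SDG j) := ⟨⟨0, 0⟩⟩
instance : Inv (SDG j) := ⟨fun x => ⟨-(kk j ^ x.e.val * x.a), x.e⟩⟩

lemma mul_def (x y : SDG j) :
    x * y = ⟨x.a + kk j ^ x.e.val * y.a, x.e + y.e⟩ := rfl

lemma one_def : (1 : SDG j) = ⟨0, 0⟩ := rfl

lemma kk_pow_val_add (ε δ : ZMod 2) :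
    kk j ^ (ε + δ).val = kk j ^ ε.val * kk j ^ δ.val := by
  rw [ZMod.val_add, ← (pow_eq_pow_mod (ε.val + δ.val) (kk_sq (j := j)))]
  exact pow_add _ _ _

instance : Group (SDG j) where
  mul_assoc x y z := by
    simp only [mul_def, kk_pow_val_add, mul_add, ← mul_assoc]
    ext <;> simp <;> ring
  one_mul x := by
    simp only [one_def, mul_def]
    ext <;> simp [ZMod.val_zero]
  mul_one x := by
    simp only [one_def, mul_def]
    ext <;> simp
  inv_mul_cancel x := by
    show (⟨-(kk j ^ x.e.val * x.a), x.e⟩ * x : SDG j) = ⟨0, 0⟩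
    simp only [mul_def]
    ext <;> simp
    · have := zmod2_cases x.e
      rcases this with h | h <;> simp [h]
      decide





/-- the rotation generator -/
def rr : SDG j := ⟨1, 0⟩
/-- the reflection generator -/
def ss : SDG j := ⟨0, 1⟩

lemma val_zero2 : (0 : ZMod 2).val = 0 := rfl
lemma val_one2 : (1 : ZMod 2).val = 1 := rfl

lemma mk_zero_mul (b c : ZMod (2 ^ (j + 3))) (ε : ZMod 2) :
    (⟨b, 0⟩ : SDG j) * ⟨c, ε⟩ = ⟨b + c, ε⟩ := by
  simp [mul_def, val_zero2]

lemma mk_zero_pow (b : ZMod (2 ^ (j + 3))) (t : ℕ) :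
    (⟨b, 0⟩ : SDG j) ^ t = ⟨(t : ZMod (2 ^ (j + 3))) * b, 0⟩ := by
  induction t with
  | zero => simp [one_def]
  | succ n ih =>
      rw [pow_succ, ih, mul_def]
      ext <;> simp [val_zero2] ; ring

lemma rr_pow (t : ℕ) : (rr : SDG j) ^ t = ⟨(t : ZMod (2 ^ (j + 3))), 0⟩ := by
  rw [rr, mk_zero_pow, mul_one]

lemma decomp (x : SDG j) : x = rr ^ x.a.val * ss ^ x.e.val := by
  rcases zmod2_cases x.e with h | h
  · rw [h, val_zero2, pow_zero, mul_one, rr_pow, ZMod.natCast_rightInverse x.a]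
    ext <;> simp [h]
  · rw [h, val_one2, pow_one, rr_pow, ZMod.natCast_rightInverse x.a, ss, mul_def]
    ext <;> simp [h, val_zero2]

lemma rr_pow_card : (rr : SDG j) ^ (2 ^ (j + 3)) = 1 := by
  rw [rr_pow, one_def]
  ext <;> simp

lemma ss_sq : (ss : SDG j) ^ 2 = 1 := by
  rw [pow_two, ss, mul_def, one_def]
  ext <;> simp
  decide

lemma kk_cast : ((2 ^ (j + 2) - 1 : ℕ) : ZMod (2 ^ (j + 3))) = kk j := by
  rw [Nat.cast_sub Nat.one_le_two_pow]
  push_cast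
  rfl

lemma srs : (ss : SDG j) * rr * ss = rr ^ (2 ^ (j + 2) - 1) := by
  rw [rr_pow, kk_cast, ss, rr, mul_def, mul_def]
  ext <;> simp [val_one2]
  decide

lemma mk_one_sq (b : ZMod (2 ^ (j + 3))) :
    (⟨b, 1⟩ : SDG j) ^ 2 = ⟨(1 + kk j) * b, 0⟩ := by
  rw [pow_two, mul_def]
  ext <;> simp [val_one2]
  · ring
  · decide

lemma one_add_kk : (1 : ZMod (2 ^ (j + 3))) + kk j = 2 ^ (j + 2) := by
  rw [kk]; ring

lemma mk_one_pow_four (b : ZMod (2 ^ (j + 3))) : (⟨b, 1⟩ : SDG j) ^ 4 = 1 := by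
  have : (4 : ℕ) = 2 * 2 := by norm_num
  rw [this, pow_mul, mk_one_sq, mk_zero_pow, one_def]
  ext <;> simp [one_add_kk]
  rw [← mul_assoc, show ((2 : ZMod (2 ^ (j+3))) * 2 ^ (j+2)) = 2 ^ (j+3) from by ring,
    two_pow_j3, zero_mul]

end SDG

end SDAux
section Presented

open SDAux SDAux.SDG

variable {j : ℕ}

/-- `r` in the presented group. -/
def RR (j : ℕ) : PresentedGroup (semidihedralRels (j + 4)) := PresentedGroup.of 0
/-- `s` in the presented group. -/
def SS (j : ℕ) : PresentedGroup (semidihedralRels (j + 4)) := PresentedGroup.of 1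

lemma exp1 : (j + 4) - 1 = j + 3 := by omega
lemma exp2 : (j + 4) - 2 = j + 2 := by omega

lemma mk_rel_eq_one {w : FreeGroup (Fin 2)} (hw : w ∈ semidihedralRels (j + 4)) :
    PresentedGroup.mk (semidihedralRels (j + 4)) w = 1 :=
  (QuotientGroup.eq_one_iff w).2 (Subgroup.subset_normalClosure hw)

lemma RR_pow_card : (RR j) ^ (2 ^ (j + 3)) = 1 := by
  have h := mk_rel_eq_one (j := j)
    (w := (FreeGroup.of 0) ^ (2 ^ ((j + 4) - 1))) (by left; rfl)
  rw [map_pow] at h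
  rw [← exp1 (j := j)]
  exact h

lemma SS_sq : (SS j) ^ 2 = 1 := by
  have h := mk_rel_eq_one (j := j)
    (w := (FreeGroup.of 1) ^ 2) (by right; left; rfl)
  rw [map_pow] at h
  exact h

lemma SS_mul_self : (SS j) * SS j = 1 := by
  have := SS_sq (j := j); rwa [pow_two] at this

lemma SS_inv : (SS j)⁻¹ = SS j :=
  inv_eq_of_mul_eq_one_right SS_mul_self

lemma SRS : (SS j) * RR j * SS j = (RR j) ^ (2 ^ (j + 2) - 1) := by
  have h := mk_rel_eq_one (j := j)
    (w := FreeGroup.of 1 * FreeGroup.of 0 * FreeGroup.of 1 *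
      ((FreeGroup.of 0)⁻¹) ^ (2 ^ ((j + 4) - 2) - 1)) (by right; right; rfl)
  rw [map_mul, map_mul, map_mul, map_pow, map_inv] at h
  rw [exp2] at h
  have h2 : (SS j * RR j * SS j) * ((RR j)⁻¹) ^ (2 ^ (j + 2) - 1) = 1 := h
  rw [inv_pow] at h2
  exact (mul_inv_eq_one).1 h2

lemma SRS_pow (t : ℕ) :
    (SS j) * (RR j) ^ t * SS j = (RR j) ^ ((2 ^ (j + 2) - 1) * t) := by
  calc SS j * RR j ^ t * SS j = SS j * RR j ^ t * (SS j)⁻¹ := by rw [SS_inv]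
    _ = (SS j * RR j * (SS j)⁻¹) ^ t := conj_pow.symm
    _ = (SS j * RR j * SS j) ^ t := by rw [SS_inv]
    _ = ((RR j) ^ (2 ^ (j + 2) - 1)) ^ t := by rw [SRS]
    _ = (RR j) ^ ((2 ^ (j + 2) - 1) * t) := by rw [← pow_mul]

lemma Rmod (t : ℕ) : (RR j) ^ t = (RR j) ^ (t % 2 ^ (j + 3)) :=
  pow_eq_pow_mod t RR_pow_card

lemma Rcast {t₁ t₂ : ℕ} (h : (t₁ : ZMod (2 ^ (j + 3))) = (t₂ : ZMod (2 ^ (j + 3)))) :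
    (RR j) ^ t₁ = (RR j) ^ t₂ := by
  rw [Rmod t₁, Rmod t₂, (ZMod.natCast_eq_natCast_iff _ _ _).1 h]

lemma Smod (t : ℕ) : (SS j) ^ t = (SS j) ^ (t % 2) :=
  pow_eq_pow_mod t SS_sq

lemma Scast {t₁ t₂ : ℕ} (h : (t₁ : ZMod 2) = (t₂ : ZMod 2)) :
    (SS j) ^ t₁ = (SS j) ^ t₂ := by
  rw [Smod t₁, Smod t₂, (ZMod.natCast_eq_natCast_iff _ _ _).1 h]

/-- the candidate inverse function from the concrete group to the presented group -/
def hFun (j : ℕ) (x : SDG j) : PresentedGroup (semidihedralRels (j + 4)) :=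
  (RR j) ^ x.a.val * (SS j) ^ x.e.val

lemma hFun_mul (x y : SDG j) : hFun j (x * y) = hFun j x * hFun j y := by
  rcases zmod2_cases x.e with h | h
  · have hxy : x * y = ⟨x.a + y.a, y.e⟩ := by
      rw [mul_def, h]; ext <;> simp [val_zero2]
    rw [hFun, hFun, hFun, hxy, h, val_zero2, pow_zero, mul_one]
    have hr : (RR j) ^ ((⟨x.a + y.a, y.e⟩ : SDG j).a.val) = (RR j) ^ (x.a.val + y.a.val) := by
      apply Rcast
      push_cast [ZMod.natCast_val, ZMod.cast_id]
      rfl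
    rw [hr, pow_add, mul_assoc]
  · have hxy : x * y = ⟨x.a + kk j * y.a, 1 + y.e⟩ := by
      rw [mul_def, h, val_one2, pow_one]
    rw [hFun, hFun, hFun, hxy, h, val_one2, pow_one]
    have hr : (RR j) ^ ((⟨x.a + kk j * y.a, 1 + y.e⟩ : SDG j).a.val)
        = (RR j) ^ (x.a.val + (2 ^ (j + 2) - 1) * y.a.val) := by
      apply Rcast
      push_cast [ZMod.natCast_val, ZMod.cast_id, kk_cast]
      rfl
    have hs : (SS j) ^ ((⟨x.a + kk j * y.a, 1 + y.e⟩ : SDG j).e.val)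
        = (SS j) ^ (1 + y.e.val) := by
      apply Scast
      push_cast [ZMod.natCast_val, ZMod.cast_id]
      rfl
    rw [hr, hs, pow_add (RR j) x.a.val ((2 ^ (j + 2) - 1) * y.a.val),
      pow_add (SS j) 1 y.e.val, pow_one]
    have key : (SS j) * ((RR j) ^ y.a.val * (SS j) ^ y.e.val)
        = (RR j) ^ ((2 ^ (j + 2) - 1) * y.a.val) * ((SS j) * (SS j) ^ y.e.val) := by
      rw [← SRS_pow]
      simp only [mul_assoc]
      rw [← mul_assoc (SS j) (SS j) ((SS j) ^ y.e.val), SS_mul_self, one_mul]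
    conv_rhs => rw [mul_assoc, key]
    rw [mul_assoc]

/-- the homomorphism from the concrete group to the presented group -/
def hHom (j : ℕ) : SDG j →* PresentedGroup (semidihedralRels (j + 4)) :=
  MonoidHom.mk' (hFun j) hFun_mul

lemma hHom_surjective : Function.Surjective (hHom j) := by
  rw [← MonoidHom.range_eq_top, ← top_le_iff,
    ← PresentedGroup.closure_range_of (semidihedralRels (j + 4))]
  apply Subgroup.closure_le _ |>.2
  rintro _ ⟨x, rfl⟩
  fin_cases x
  · exact ⟨rr, by simp [hHom, hFun, rr, ZMod.val_one, val_zero2, RR]⟩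
  · exact ⟨ss, by simp [hHom, hFun, ss, ZMod.val_zero, val_one2, SS]⟩

lemma lift_rels (w : FreeGroup (Fin 2)) (hw : w ∈ semidihedralRels (j + 4)) :
    FreeGroup.lift (![rr, ss] : Fin 2 → SDG j) w = 1 := by
  rcases hw with h | h | h
  · subst h
    rw [map_pow, FreeGroup.lift_apply_of, Matrix.cons_val_zero, exp1, rr_pow_card]
  · subst h
    rw [map_pow, FreeGroup.lift_apply_of]
    simp only [Matrix.cons_val_one, Matrix.head_cons, Matrix.cons_val_zero]
    exact ss_sq
  · subst h
    simp only [map_mul, map_pow, map_inv, FreeGroup.lift_apply_of, Matrix.cons_val_zero,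
      Matrix.cons_val_one, Matrix.head_cons]
    rw [exp2, inv_pow]
    exact mul_inv_eq_one.2 srs

/-- the homomorphism from the presented group to the concrete group -/
def fHom (j : ℕ) : PresentedGroup (semidihedralRels (j + 4)) →* SDG j :=
  PresentedGroup.toGroup (f := (![rr, ss] : Fin 2 → SDG j)) lift_rels

lemma fHom_RR : fHom j (RR j) = rr := by
  rw [RR, fHom, PresentedGroup.toGroup.of, Matrix.cons_val_zero]

lemma fHom_SS : fHom j (SS j) = ss := by
  rw [SS, fHom, PresentedGroup.toGroup.of]
  simp only [Matrix.cons_val_one, Matrix.head_cons, Matrix.cons_val_zero]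

lemma fHom_hHom (x : SDG j) : fHom j (hHom j x) = x := by
  show fHom j (hFun j x) = x
  rw [hFun, map_mul, map_pow, map_pow, fHom_RR, fHom_SS]
  exact (decomp x).symm

lemma hHom_injective : Function.Injective (hHom j) := by
  intro x y hxy
  have := congrArg (fHom j) hxy
  rwa [fHom_hHom, fHom_hHom] at this

/-- The concrete group is isomorphic to the presented group. -/
noncomputable def eIso (j : ℕ) : SDG j ≃* PresentedGroup (semidihedralRels (j + 4)) :=
  MulEquiv.ofBijective (hHom j) ⟨hHom_injective, hHom_surjective⟩

end Presented

section Aut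

open SDAux SDAux.SDG

variable {j : ℕ}

lemma natCast_pow_ne_zero : ((2 ^ (j + 2) : ℕ) : ZMod (2 ^ (j + 3))) ≠ 0 := by
  rw [Ne, ZMod.natCast_eq_zero_iff]
  intro hdvd
  have h1 := Nat.le_of_dvd (by positivity) hdvd
  have h2 : (2 : ℕ) ^ (j + 2) < 2 ^ (j + 3) :=
    Nat.pow_lt_pow_right one_lt_two (by omega)
  omega

lemma phi_rr_e (φ : MulAut (SDG j)) : (φ rr).e = 0 := by
  rcases zmod2_cases (φ rr).e with h | h
  · exact h
  exfalso
  have h4 : (φ rr) ^ 4 = 1 := by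
    have hr : φ rr = ⟨(φ rr).a, 1⟩ := by ext <;> simp [h]
    rw [hr, mk_one_pow_four]
  have hr4 : rr ^ 4 = (1 : SDG j) := by
    apply φ.injective
    rw [map_pow, h4, map_one]
  rw [rr_pow] at hr4
  have h0 : ((4 : ℕ) : ZMod (2 ^ (j + 3))) = 0 := congrArg SDG.a hr4
  rw [ZMod.natCast_eq_zero_iff] at h0
  have h1 := Nat.le_of_dvd (by norm_num) h0
  have h2 : (2 : ℕ) ^ 3 ≤ 2 ^ (j + 3) := Nat.pow_le_pow_right (by norm_num) (by omega)
  omega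

lemma phi_pow_rr (φ : MulAut (SDG j)) (t : ℕ) :
    (φ ^ t) rr = ⟨(φ rr).a ^ t, 0⟩ := by
  induction t with
  | zero => rw [pow_zero, pow_zero, MulAut.one_apply, rr]
  | succ n ih =>
      set a := (φ rr).a with ha
      have hr : φ rr = rr ^ a.val := by
        rw [rr_pow, ZMod.natCast_rightInverse]
        ext <;> simp [phi_rr_e φ, ha]
      rw [pow_succ, MulAut.mul_apply, hr, map_pow, ih, mk_zero_pow,
        ZMod.natCast_rightInverse]
      ext
      · show a * a ^ n = a ^ (n + 1)
        exact (pow_succ' a n).symm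
      · rfl

lemma phi_rr_a_pow (φ : MulAut (SDG j)) : (φ rr).a ^ (2 ^ (j + 2)) = 1 := by
  set i := (φ rr).a with hi
  have hodd : ¬ 2 ∣ i.val := by
    rintro ⟨t, ht⟩
    have hit : i = ((2 * t : ℕ) : ZMod (2 ^ (j + 3))) := by
      rw [← ht, ZMod.natCast_rightInverse]
    have hpow : (φ rr) ^ (2 ^ (j + 2)) = 1 := by
      have hr : φ rr = ⟨i, 0⟩ := by ext <;> simp [phi_rr_e φ, hi]
      rw [hr, mk_zero_pow, hit, one_def]
      ext <;> simp
      rw [show ((2 : ZMod (2 ^ (j + 3))) ^ (j + 2)) * (2 * (t : ZMod (2 ^ (j + 3))))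
          = 2 ^ (j + 3) * t from by ring, two_pow_j3, zero_mul]
    have hr1 : rr ^ (2 ^ (j + 2)) = (1 : SDG j) := by
      apply φ.injective
      rw [map_pow, hpow, map_one]
    rw [rr_pow] at hr1
    exact natCast_pow_ne_zero (congrArg SDG.a hr1)
  have hcop : Nat.Coprime i.val (2 ^ (j + 3)) :=
    Nat.Coprime.pow_right _
      (Nat.coprime_comm.mp ((Nat.Prime.coprime_iff_not_dvd Nat.prime_two).2 hodd))
  have hu : (ZMod.unitOfCoprime i.val hcop) ^ (2 ^ (j + 2)) = 1 := by
    have h := ZMod.pow_totient (ZMod.unitOfCoprime i.val hcop)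
    rwa [Nat.totient_prime_pow Nat.prime_two (by omega : 0 < j + 3),
      show (j + 3) - 1 = j + 2 from by omega, show 2 - 1 = 1 from rfl, mul_one] at h
  have hcast := congrArg (fun u : (ZMod (2 ^ (j + 3)))ˣ => (u : ZMod (2 ^ (j + 3)))) hu
  simpa [Units.val_pow_eq_pow_val, ZMod.coe_unitOfCoprime,
    ZMod.natCast_rightInverse i] using hcast

lemma fix_rr_pow {χ : MulAut (SDG j)} (h : χ rr = rr) (t : ℕ) : (χ ^ t) rr = rr := by
  induction t with
  | zero => rw [pow_zero, MulAut.one_apply]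
  | succ n ih => rw [pow_succ, MulAut.mul_apply, h, ih]

lemma fix_mk_zero {χ : MulAut (SDG j)} (h : χ rr = rr) (b : ZMod (2 ^ (j + 3))) :
    χ ⟨b, 0⟩ = ⟨b, 0⟩ := by
  rw [show (⟨b, 0⟩ : SDG j) = rr ^ b.val from by rw [rr_pow, ZMod.natCast_rightInverse],
    map_pow, h]

lemma psi_ss_e {χ : MulAut (SDG j)} (h : χ rr = rr) : (χ ss).e = 1 := by
  rcases zmod2_cases (χ ss).e with he | he
  · exfalso
    have h1 : χ ss = χ ⟨(χ ss).a, 0⟩ := by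
      rw [fix_mk_zero h]
      ext <;> simp [he]
    have h2 := congrArg SDG.e (χ.injective h1)
    have h3 : (1 : ZMod 2) = 0 := h2
    exact absurd h3 (by decide)
  · exact he

lemma psi_iter_ss {χ : MulAut (SDG j)} (h : χ rr = rr) (t : ℕ) :
    (χ ^ t) ss = ⟨(t : ZMod (2 ^ (j + 3))) * (χ ss).a, 1⟩ := by
  induction t with
  | zero =>
      rw [pow_zero, MulAut.one_apply, ss]
      ext <;> simp
  | succ n ih =>
      set u := (χ ss).a with hu
      have hs : χ ss = (⟨u, 0⟩ : SDG j) * ss := by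
        have h1 : (⟨u, 0⟩ : SDG j) * ss = ⟨u, 1⟩ := by rw [ss, mk_zero_mul, add_zero]
        rw [h1]
        ext
        · exact hu.symm
        · exact psi_ss_e h
      rw [pow_succ, MulAut.mul_apply, hs, map_mul, fix_mk_zero (fix_rr_pow h n), ih,
        mk_zero_mul]
      ext
      · show u + (n : ZMod (2 ^ (j + 3))) * u = ((n + 1 : ℕ) : ZMod (2 ^ (j + 3))) * u
        push_cast
        ring
      · rfl

lemma aut_pow_eq_one (φ : MulAut (SDG j)) : φ ^ (2 ^ (2 * j + 5)) = 1 := by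
  set ψ := φ ^ (2 ^ (j + 2)) with hψ
  have hψr : ψ rr = rr := by
    rw [hψ, phi_pow_rr, phi_rr_a_pow, rr]
  have hr : (ψ ^ (2 ^ (j + 3))) rr = rr := fix_rr_pow hψr _
  have hs : (ψ ^ (2 ^ (j + 3))) ss = ss := by
    rw [psi_iter_ss hψr, ss]
    have h0 : ((2 ^ (j + 3) : ℕ) : ZMod (2 ^ (j + 3))) = 0 := ZMod.natCast_self _
    ext
    · show ((2 ^ (j + 3) : ℕ) : ZMod (2 ^ (j + 3))) * (ψ ss).a = 0
      rw [h0, zero_mul]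
    · rfl
  have hexp : (2 : ℕ) ^ (2 * j + 5) = 2 ^ (j + 2) * 2 ^ (j + 3) := by
    rw [← pow_add, show j + 2 + (j + 3) = 2 * j + 5 from by omega]
  have key : φ ^ (2 ^ (2 * j + 5)) = ψ ^ (2 ^ (j + 3)) := by
    rw [hexp, pow_mul, hψ]
  rw [key]
  refine DFunLike.ext _ _ fun x => ?_
  show (ψ ^ (2 ^ (j + 3))) x = x
  conv_lhs => rw [decomp x]
  rw [map_mul, map_pow, map_pow, hr, hs, ← decomp x]

theorem isPGroup_aut_SDG (j : ℕ) : IsPGroup 2 (MulAut (SDG j)) :=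
  fun φ => ⟨2 * j + 5, aut_pow_eq_one φ⟩

end Aut

/-- For m ≥ 4, the automorphism group of SD_{2^m} is a 2-group. -/
theorem stmt_10 (m : ℕ) (hm : 4 ≤ m) :
    IsPGroup 2 (MulAut (SemidihedralGroup m)) := by
  obtain ⟨j, rfl⟩ : ∃ j, m = j + 4 := ⟨m - 4, by omega⟩
  have hP : IsPGroup 2 (MulAut (PresentedGroup (semidihedralRels (j + 4)))) := by
    intro φ
    obtain ⟨k, hk⟩ := isPGroup_aut_SDG j ((MulAut.congr (eIso j)).symm φ)
    refine ⟨k, ?_⟩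
    have h2 : (MulAut.congr (eIso j))
        (((MulAut.congr (eIso j)).symm φ) ^ 2 ^ k) = 1 := by rw [hk, map_one]
    rwa [map_pow, MulEquiv.apply_symm_apply] at h2
  exact hP
end

section
/- Let G be a finite group and N ⊴ G a normal subgroup with G/N cyclic. If N is perfect and the Schur multiplier of N is trivial, then the Schur multiplier of G is trivial. -/
namespace Stmt11Aux

variable {G : Type} [Group G]

/-- Normalized multiplicative 2-cocycle. -/
def Coc (f : G → G → ℂˣ) : Prop :=
  (∀ g h k, f (g*h) k * f g h = f h k * f g (h*k)) ∧ (∀ g, f 1 g = 1) ∧ (∀ g, f g 1 = 1)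

/-- The central extension of `G` by `ℂˣ` determined by a normalized 2-cocycle. -/
def E (f : G → G → ℂˣ) (_hf : Coc f) : Type := ℂˣ × G

variable {f : G → G → ℂˣ} {hf : Coc f}

@[reducible] def Emk (f : G → G → ℂˣ) (hf : Coc f) (a : ℂˣ) (g : G) : E f hf := (a, g)

lemma f_inv_self (hf : Coc f) (g : G) : f g⁻¹ g = f g g⁻¹ := by
  have := hf.1 g g⁻¹ g
  simpa [hf.2.1, hf.2.2] using this.symm

instance instGroupE (f : G → G → ℂˣ) (hf : Coc f) : Group (E f hf) where
  mul x y := (x.1 * y.1 * f x.2 y.2, x.2 * y.2)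
  one := ((1 : ℂˣ), (1 : G))
  inv x := ((x.1 * f x.2 x.2⁻¹)⁻¹, x.2⁻¹)
  mul_assoc x y z := by
    have h := hf.1 x.2 y.2 z.2
    show ((x.1 * y.1 * f x.2 y.2) * z.1 * f (x.2*y.2) z.2, (x.2*y.2)*z.2)
        = (x.1 * (y.1 * z.1 * f y.2 z.2) * f x.2 (y.2*z.2), x.2*(y.2*z.2))
    refine Prod.ext ?_ (mul_assoc _ _ _)
    ext
    have h' : (f (x.2*y.2) z.2 : ℂ) * f x.2 y.2 = f y.2 z.2 * f x.2 (y.2*z.2) := by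
      exact_mod_cast congrArg Units.val h
    push_cast
    linear_combination (x.1 : ℂ) * y.1 * z.1 * h'
  one_mul x := by
    show ((1 : ℂˣ) * x.1 * f 1 x.2, 1 * x.2) = x
    simp [hf.2.1]
    rfl
  mul_one x := by
    show (x.1 * 1 * f x.2 1, x.2 * 1) = x
    simp [hf.2.2]
    rfl
  inv_mul_cancel x := by
    show (((x.1 * f x.2 x.2⁻¹)⁻¹) * x.1 * f x.2⁻¹ x.2, x.2⁻¹ * x.2) = ((1:ℂˣ), (1:G))
    refine Prod.ext ?_ (inv_mul_cancel _)
    show ((x.1 * f x.2 x.2⁻¹)⁻¹) * x.1 * f x.2⁻¹ x.2 = 1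
    rw [f_inv_self hf]
    ext
    push_cast
    field_simp

@[simp] lemma Emk_mul (a b : ℂˣ) (g h : G) :
    Emk f hf a g * Emk f hf b h = Emk f hf (a * b * f g h) (g * h) := rfl

@[simp] lemma Emk_one : Emk f hf 1 1 = 1 := rfl

lemma Emk_eta (x : E f hf) : Emk f hf x.1 x.2 = x := rfl

lemma Emk_inj {a b : ℂˣ} {g h : G} (hh : Emk f hf a g = Emk f hf b h) : a = b ∧ g = h :=
  ⟨congrArg Prod.fst hh, congrArg Prod.snd hh⟩

/-- Projection to `G`. -/
def Eπ (f : G → G → ℂˣ) (hf : Coc f) : E f hf →* G where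
  toFun x := x.2
  map_one' := rfl
  map_mul' _ _ := rfl

@[simp] lemma Eπ_mk (a : ℂˣ) (g : G) : Eπ f hf (Emk f hf a g) = g := rfl

/-- Central embedding of `ℂˣ`. -/
def Eι (f : G → G → ℂˣ) (hf : Coc f) : ℂˣ →* E f hf where
  toFun a := Emk f hf a 1
  map_one' := rfl
  map_mul' a b := by simp [hf.2.1]

@[simp] lemma Eι_apply (a : ℂˣ) : Eι f hf a = Emk f hf a 1 := rfl

lemma Eι_central (a : ℂˣ) (x : E f hf) : Eι f hf a * x = x * Eι f hf a := by
  show (a * x.1 * f 1 x.2, (1:G) * x.2) = (x.1 * a * f x.2 1, x.2 * 1)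
  simp [hf.2.1, hf.2.2, mul_comm]

lemma eq_Eι_of_π_eq_one {x : E f hf} (h : Eπ f hf x = 1) : x = Eι f hf x.1 := by
  rw [← Emk_eta x]
  have h2 : x.2 = 1 := h
  rw [h2]
  rfl

end Stmt11Aux

namespace Stmt11Aux

theorem core {G : Type} [Group G] [Finite G] (N : Subgroup G) [hNrm : N.Normal]
    (hcyc : IsCyclic (G ⧸ N))
    (hperf : ⁅(⊤ : Subgroup N), (⊤ : Subgroup N)⁆ = (⊤ : Subgroup N))
    (f : G → G → ℂˣ) (hf : Coc f) (hN1 : ∀ n m : N, f n m = 1) :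
    ∃ x : G → ℂˣ, ∀ g h, f g h = x h * (x (g*h))⁻¹ * x g := by
  classical
  -- the embedding of N in the extension
  let i : N →* E f hf := { toFun := fun n => Emk f hf 1 (n : G)
                           map_one' := rfl
                           map_mul' := by intro n m; simp [hN1 n m] }
  have hπi : ∀ n : N, Eπ f hf (i n) = (n : G) := fun n => rfl
  -- the image of N is normal, using perfectness of N
  have hNt : ∀ (x : E f hf) (n : N), x * i n * x⁻¹ = i ⟨(Eπ f hf x) * n * (Eπ f hf x)⁻¹,
      hNrm.conj_mem _ n.2 _⟩ := by
    intro x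
    set g : G := Eπ f hf x with hg
    let σ : N → N := fun n => ⟨g * n * g⁻¹, hNrm.conj_mem _ n.2 _⟩
    have hσmul : ∀ n m, σ (n * m) = σ n * σ m := by
      intro n m; apply Subtype.ext; show g * (↑n * ↑m) * g⁻¹ = (g * n * g⁻¹) * (g * m * g⁻¹); group
    let t : N → E f hf := fun n => x * i n * x⁻¹ * (i (σ n))⁻¹
    have htπ : ∀ n, Eπ f hf (t n) = 1 := by
      intro n
      simp only [t, map_mul, map_inv, hπi]
      show g * ↑n * g⁻¹ * (g * ↑n * g⁻¹)⁻¹ = 1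
      group
    have htc : ∀ n, t n = Eι f hf (t n).1 := fun n => eq_Eι_of_π_eq_one (htπ n)
    have hσ1 : σ 1 = 1 := by apply Subtype.ext; show g * ((1:N) : G) * g⁻¹ = ((1:N) : G); simp
    have htmul : ∀ n m, t (n * m) = t n * t m := by
      intro n m
      have h1 : (i (σ n))⁻¹ * t m = t m * (i (σ n))⁻¹ := by
        rw [htc m, Eι_central]
      refine Eq.symm ?_
      calc t n * t m = x * i n * x⁻¹ * ((i (σ n))⁻¹ * t m) := by simp [t, mul_assoc]
        _ = x * i n * x⁻¹ * (t m * (i (σ n))⁻¹) := by rw [h1]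
        _ = x * i n * (x⁻¹ * (x * i m * x⁻¹)) * ((i (σ m))⁻¹ * (i (σ n))⁻¹) := by
              simp [t, mul_assoc]
        _ = x * (i n * i m) * x⁻¹ * ((i (σ m))⁻¹ * (i (σ n))⁻¹) := by group
        _ = x * i (n * m) * x⁻¹ * (i (σ (n*m)))⁻¹ := by
              rw [← map_mul, ← mul_inv_rev, ← map_mul, ← hσmul]
        _ = t (n * m) := rfl
    let χ : N →* ℂˣ := { toFun := fun n => (t n).1
                         map_one' := by
                           have ht1 : t 1 = 1 := by simp [t, hσ1]
                           show (t 1).1 = 1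
                           rw [ht1]; rfl
                         map_mul' := by
                           intro n m
                           have h2 := htmul n m
                           rw [htc n, htc m, ← map_mul] at h2
                           show (t (n*m)).1 = (t n).1 * (t m).1
                           rw [h2]; rfl }
    have hχ : ∀ n, χ n = 1 := by
      intro n
      have hk : commutator N ≤ χ.ker := Abelianization.commutator_subset_ker χ
      have : (⊤ : Subgroup N) ≤ χ.ker := by
        rw [← hperf]; exact hk
      exact this (Subgroup.mem_top n)
    intro n
    have h1 : t n = 1 := by
      rw [htc n]; show Eι f hf (χ n) = 1; rw [hχ n, map_one]
    have h1' : x * i n * x⁻¹ * (i (σ n))⁻¹ = 1 := h1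
    exact mul_inv_eq_one.1 h1'
  have hrange : ∀ (x : E f hf) (e : E f hf), e ∈ i.range → x * e * x⁻¹ ∈ i.range := by
    intro x e he
    obtain ⟨n, rfl⟩ := he
    rw [hNt x n]
    exact ⟨_, rfl⟩
  haveI hrn : (i.range).Normal := ⟨fun e he x => hrange x e he⟩
  -- cyclic generator of the quotient
  obtain ⟨q, hq⟩ := hcyc.exists_generator
  obtain ⟨g₀, hg₀⟩ := QuotientGroup.mk_surjective (s := N) q
  set m : ℕ := orderOf q with hmdef
  have hm : 0 < m := orderOf_pos q
  have hg0m : g₀ ^ m ∈ N := by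
    rw [← QuotientGroup.eq_one_iff]
    have : (QuotientGroup.mk (g₀ ^ m) : G ⧸ N) = q ^ m := by
      rw [← hg₀]; rfl
    rw [this, pow_orderOf_eq_one]
  set x₀ : E f hf := Emk f hf 1 g₀ with hx₀
  set a₀ : ℂˣ := (x₀ ^ m).1 with ha₀
  have hx0m : x₀ ^ m = Emk f hf a₀ (g₀ ^ m) := by
    have h2 : (x₀ ^ m).2 = g₀ ^ m := map_pow (Eπ f hf) x₀ m
    rw [← Emk_eta (x₀ ^ m), h2]
  -- m-th root of a₀
  obtain ⟨z, hz⟩ := IsAlgClosed.exists_pow_nat_eq (k := ℂ) (a₀ : ℂ) hm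
  have hz0 : z ≠ 0 := by
    intro h; rw [h] at hz
    exact (a₀.ne_zero) (by simpa [zero_pow hm.ne'] using hz.symm)
  set r : ℂˣ := Units.mk0 z hz0 with hr
  have hrm : r ^ m = a₀ := by
    ext; push_cast [hr]; simpa using hz
  set y : E f hf := Eι f hf r⁻¹ * x₀ with hy
  have hyπ : Eπ f hf y = g₀ := by
    rw [hy, map_mul]
    exact one_mul g₀
  have hym : y ^ m = i ⟨g₀ ^ m, hg0m⟩ := by
    have hcomm : Commute (Eι f hf r⁻¹) x₀ := Eι_central r⁻¹ x₀
    rw [hy, hcomm.mul_pow, ← map_pow, hx0m]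
    have : (r⁻¹) ^ m = a₀⁻¹ := by rw [inv_pow, hrm]
    rw [this]
    show Emk f hf a₀⁻¹ 1 * Emk f hf a₀ (g₀ ^ m) = Emk f hf 1 (g₀ ^ m)
    rw [Emk_mul]
    congr 1
    · rw [hf.2.1]; group
    · exact one_mul _
  set E₀ : Subgroup (E f hf) := i.range ⊔ Subgroup.zpowers y with hE₀
  -- surjectivity
  have hsurj : ∀ g : G, ∃ w : E₀, Eπ f hf (w : E f hf) = g := by
    intro g
    obtain ⟨k, hk⟩ := Subgroup.mem_zpowers_iff.1 (hq (QuotientGroup.mk g))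
    have hmem : (g₀ ^ k)⁻¹ * g ∈ N := by
      rw [← QuotientGroup.eq]
      have h1 : (QuotientGroup.mk (g₀ ^ k) : G ⧸ N) = (QuotientGroup.mk g₀ : G ⧸ N) ^ k :=
        map_zpow (QuotientGroup.mk' N) g₀ k
      rw [h1, hg₀, hk]
    refine ⟨⟨y ^ k * i ⟨(g₀ ^ k)⁻¹ * g, hmem⟩, ?_⟩, ?_⟩
    · exact Subgroup.mul_mem _ (Subgroup.mem_sup_right (Subgroup.zpow_mem _ (Subgroup.mem_zpowers y) k))
        (Subgroup.mem_sup_left ⟨_, rfl⟩)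
    · show Eπ f hf (y ^ k * i ⟨(g₀ ^ k)⁻¹ * g, hmem⟩) = g
      rw [map_mul, map_zpow, hyπ, hπi]
      group
  -- injectivity
  have hinj : ∀ w : E₀, Eπ f hf (w : E f hf) = 1 → w = 1 := by
    rintro ⟨w, hw⟩ hw1
    have hw' : w ∈ (↑(i.range ⊔ Subgroup.zpowers y) : Set (E f hf)) := hw
    rw [Subgroup.normal_mul] at hw'
    obtain ⟨u, hu, v, hv, rfl⟩ := hw'
    obtain ⟨n, rfl⟩ := hu
    obtain ⟨k, rfl⟩ := Subgroup.mem_zpowers_iff.1 hv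
    have hπw : (n : G) * g₀ ^ k = 1 := by
      rw [map_mul, map_zpow, hyπ, hπi] at hw1
      exact hw1
    have hg0k : g₀ ^ k ∈ N := by
      have h3 : g₀ ^ k = (n : G)⁻¹ := (inv_eq_of_mul_eq_one_right hπw).symm
      rw [h3]; exact N.inv_mem n.2
    have hqk : q ^ k = 1 := by
      rw [← hg₀]
      have h1 : (QuotientGroup.mk (g₀ ^ k) : G ⧸ N) = (QuotientGroup.mk g₀ : G ⧸ N) ^ k :=
        map_zpow (QuotientGroup.mk' N) g₀ k
      rw [← h1]
      exact QuotientGroup.eq_one_iff _ |>.2 hg0k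
    obtain ⟨d, hd⟩ := orderOf_dvd_iff_zpow_eq_one.2 hqk
    have hyk : y ^ k ∈ i.range := by
      rw [hd, zpow_mul, zpow_natCast, hym]
      exact Subgroup.zpow_mem _ (show i ⟨g₀ ^ m, hg0m⟩ ∈ i.range from ⟨_, rfl⟩) d
    obtain ⟨n', hn'⟩ := hyk
    have hn'c : (↑n' : G) = g₀ ^ k := by
      rw [← hπi n', hn', map_zpow, hyπ]
    have hc1 : ((n * n' : N) : G) = 1 := by
      show (↑n * ↑n' : G) = 1
      rw [hn'c]; exact hπw
    have h0 : (n * n' : N) = 1 := Subtype.ext (by simpa using hc1)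
    apply Subtype.ext
    show i n * y ^ k = 1
    rw [← hn', ← map_mul, h0, map_one]
  -- build the section
  let ψ : E₀ →* G := (Eπ f hf).comp E₀.subtype
  have hψbij : Function.Bijective ψ := by
    constructor
    · rw [injective_iff_map_eq_one]
      intro w hw
      exact hinj w hw
    · intro g
      obtain ⟨w, hw⟩ := hsurj g
      exact ⟨w, hw⟩
  let s : E₀ ≃* G := MulEquiv.ofBijective ψ hψbij
  let e : G → E f hf := fun g => ((s.symm g : E₀) : E f hf)
  have heπ : ∀ g, Eπ f hf (e g) = g := by
    intro g
    have := s.apply_symm_apply g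
    exact this
  have hemul : ∀ g h, e g * e h = e (g * h) := by
    intro g h
    show ((s.symm g : E₀) : E f hf) * ((s.symm h : E₀) : E f hf) = ((s.symm (g*h) : E₀) : E f hf)
    rw [← Subgroup.coe_mul, ← map_mul]
  set x : G → ℂˣ := fun g => (e g).1 with hx
  have he : ∀ g, e g = Emk f hf (x g) g := by
    intro g
    rw [← Emk_eta (e g)]
    have : (e g).2 = g := heπ g
    rw [this]
  have key : ∀ g h, x g * x h * f g h = x (g * h) := by
    intro g h
    have := hemul g h
    rw [he g, he h, he (g*h), Emk_mul] at this
    exact (Emk_inj this).1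
  refine ⟨fun g => (x g)⁻¹, ?_⟩
  intro g h
  show f g h = (x h)⁻¹ * ((x (g*h))⁻¹)⁻¹ * (x g)⁻¹
  rw [← key g h]
  ext
  push_cast
  field_simp

end Stmt11Aux

namespace Stmt11Aux

open groupCohomology

lemma iso_subsingleton {A B : ModuleCat ℤ} (e : A ≅ B) (h : Subsingleton A) : Subsingleton B := by
  have hsurj : Function.Surjective e.hom := by
    intro b
    refine ⟨e.inv b, ?_⟩
    have h1 : (CategoryTheory.CategoryStruct.comp e.inv e.hom) b = b := by
      rw [e.inv_hom_id]; rfl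
    exact h1
  haveI := h
  exact hsurj.subsingleton

/-- From triviality of `H²` to multiplicative coboundaries. -/
lemma mulCoboundary_of_subsingleton (H : Type) [Group H]
    (hs : Subsingleton (groupCohomology (Rep.trivial ℤ H (Additive ℂˣ)) 2))
    (F : H → H → ℂˣ) (hF : ∀ g h k, F (g*h) k * F g h = F h k * F g (h*k)) :
    ∃ φ : H → ℂˣ, ∀ g h, F g h = φ h * (φ (g*h))⁻¹ * φ g := by
  have h2 : Subsingleton (groupCohomology.H2 (Rep.trivial ℤ H (Additive ℂˣ))) :=
    iso_subsingleton (CategoryTheory.Iso.refl _) hs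
  have hmem : (fun p : H × H => Additive.ofMul (F p.1 p.2))
      ∈ groupCohomology.cocycles₂ (Rep.trivial ℤ H (Additive ℂˣ)) := by
    rw [groupCohomology.mem_cocycles₂_iff]
    intro g h j
    exact hF g h j
  have hcb : ⇑(⟨_, hmem⟩ : groupCohomology.cocycles₂ (Rep.trivial ℤ H (Additive ℂˣ)))
      ∈ groupCohomology.coboundaries₂ (Rep.trivial ℤ H (Additive ℂˣ)) :=
    (groupCohomology.H2π_eq_zero_iff _).1 (Subsingleton.elim _ _)
  obtain ⟨x, hx⟩ := hcb
  exact ⟨fun g => Additive.toMul (show Additive ℂˣ from x g), fun g h => (congrFun hx (g, h)).symm⟩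

/-- From multiplicative coboundaries to triviality of `H²`. -/
lemma subsingleton_of_mulCoboundary (H : Type) [Group H]
    (hs : ∀ F : H → H → ℂˣ, (∀ g h k, F (g*h) k * F g h = F h k * F g (h*k)) →
       ∃ φ : H → ℂˣ, ∀ g h, F g h = φ h * (φ (g*h))⁻¹ * φ g) :
    Subsingleton (groupCohomology (Rep.trivial ℤ H (Additive ℂˣ)) 2) := by
  have h2 : Subsingleton (groupCohomology.H2 (Rep.trivial ℤ H (Additive ℂˣ))) := by
    have hz : ∀ c' : groupCohomology.H2 (Rep.trivial ℤ H (Additive ℂˣ)), c' = 0 := by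
      intro c'
      induction c' using groupCohomology.H2_induction_on with | h c => ?_
      rw [groupCohomology.H2π_eq_zero_iff]
      have hcoc := (groupCohomology.mem_cocycles₂_iff
        (c : H × H → (Rep.trivial ℤ H (Additive ℂˣ)))).1 c.2
      obtain ⟨φ, hφ⟩ := hs (fun g h => Additive.toMul (show Additive ℂˣ from c (g, h)))
        (fun g h k => hcoc g h k)
      exact ⟨fun g => Additive.ofMul (φ g), funext fun p => (hφ p.1 p.2).symm⟩
    exact ⟨fun a b => by rw [hz a, hz b]⟩
  exact iso_subsingleton (CategoryTheory.Iso.refl _) h2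

end Stmt11Aux



/-- If N ⊴ G with G/N cyclic, N perfect and the Schur multiplier
H²(N, ℂ^×) of N trivial, then the Schur multiplier H²(G, ℂ^×) of G is trivial. -/
theorem stmt_11 (G : Type) [Group G] [Finite G] (N : Subgroup G) [N.Normal]
    (hcyc : IsCyclic (G ⧸ N))
    (hperf : ⁅(⊤ : Subgroup N), (⊤ : Subgroup N)⁆ = (⊤ : Subgroup N))
    (hN : Subsingleton (groupCohomology (Rep.trivial ℤ N (Additive ℂˣ)) 2)) :
    Subsingleton (groupCohomology (Rep.trivial ℤ G (Additive ℂˣ)) 2) := by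
  classical
  apply Stmt11Aux.subsingleton_of_mulCoboundary
  intro F hF
  have hNmul := Stmt11Aux.mulCoboundary_of_subsingleton N hN
  -- normalization
  set cN : ℂˣ := F 1 1 with hcN
  have h1g : ∀ g, F 1 g = cN := by
    intro g
    have h := hF 1 1 g
    simp only [one_mul] at h
    exact (mul_left_cancel h).symm
  have hg1 : ∀ g, F g 1 = cN := by
    intro g
    have h := hF g 1 1
    simp only [one_mul, mul_one] at h
    exact mul_right_cancel h
  set F1 : G → G → ℂˣ := fun g h => F g h * cN⁻¹ with hF1def
  have hF1coc : ∀ g h k, F1 (g*h) k * F1 g h = F1 h k * F1 g (h*k) := by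
    intro g h k
    show F (g*h) k * cN⁻¹ * (F g h * cN⁻¹) = F h k * cN⁻¹ * (F g (h*k) * cN⁻¹)
    rw [mul_mul_mul_comm, mul_mul_mul_comm (F h k), hF g h k]
  have hF1a : ∀ g, F1 1 g = 1 := by
    intro g
    show F 1 g * cN⁻¹ = 1
    rw [h1g g]; exact mul_inv_cancel cN
  have hF1b : ∀ g, F1 g 1 = 1 := by
    intro g
    show F g 1 * cN⁻¹ = 1
    rw [hg1 g]; exact mul_inv_cancel cN
  -- kill the restriction to N using triviality of the Schur multiplier of N
  obtain ⟨φ, hφ⟩ := hNmul (fun n m : ↥N => F1 ↑n ↑m) (fun n m k => hF1coc ↑n ↑m ↑k)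
  have hφ1 : φ 1 = 1 := by
    have h := hφ 1 1
    rw [mul_one] at h
    have h2 : (1:ℂˣ) = φ 1 * (φ 1)⁻¹ * φ 1 := by rw [← hF1a 1]; exact h
    rw [mul_inv_cancel, one_mul] at h2
    exact h2.symm
  set φt : G → ℂˣ := fun g => if h : g ∈ N then φ ⟨g, h⟩ else 1 with hφtdef
  have hφtN : ∀ n : ↥N, φt ↑n = φ n := by
    intro n
    show dite _ _ _ = φ n
    rw [dif_pos n.2]
  have hφt1 : φt 1 = 1 := by
    have h := hφtN 1
    rw [hφ1] at h
    exact h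
  set Dm : G → G → ℂˣ := fun g h => φt h * (φt (g*h))⁻¹ * φt g with hDdef
  have hDcoc : ∀ g h k, Dm (g*h) k * Dm g h = Dm h k * Dm g (h*k) := by
    intro g h k
    show (φt k * (φt ((g*h)*k))⁻¹ * φt (g*h)) * (φt h * (φt (g*h))⁻¹ * φt g)
        = (φt k * (φt (h*k))⁻¹ * φt h) * (φt (h*k) * (φt (g*(h*k)))⁻¹ * φt g)
    rw [mul_assoc g h k]
    ext; push_cast; field_simp
  set F2 : G → G → ℂˣ := fun g h => F1 g h * (Dm g h)⁻¹ with hF2def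
  have hF2coc : ∀ g h k, F2 (g*h) k * F2 g h = F2 h k * F2 g (h*k) := by
    intro g h k
    show F1 (g*h) k * (Dm (g*h) k)⁻¹ * (F1 g h * (Dm g h)⁻¹)
        = F1 h k * (Dm h k)⁻¹ * (F1 g (h*k) * (Dm g (h*k))⁻¹)
    rw [mul_mul_mul_comm, mul_mul_mul_comm (F1 h k), ← mul_inv, ← mul_inv, hF1coc, hDcoc]
  have hF2a : ∀ g, F2 1 g = 1 := by
    intro g
    show F1 1 g * (Dm 1 g)⁻¹ = 1
    have h1 : Dm 1 g = 1 := by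
      show φt g * (φt (1*g))⁻¹ * φt 1 = 1
      rw [one_mul, hφt1, mul_one, mul_inv_cancel]
    rw [hF1a g, h1, inv_one, mul_one]
  have hF2b : ∀ g, F2 g 1 = 1 := by
    intro g
    show F1 g 1 * (Dm g 1)⁻¹ = 1
    have h1 : Dm g 1 = 1 := by
      show φt 1 * (φt (g*1))⁻¹ * φt g = 1
      rw [mul_one, hφt1, one_mul, inv_mul_cancel]
    rw [hF1b g, h1, inv_one, mul_one]
  have hF2N : ∀ n m : ↥N, F2 ↑n ↑m = 1 := by
    intro n m
    show F1 ↑n ↑m * (Dm ↑n ↑m)⁻¹ = 1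
    have h1 : Dm ↑n ↑m = F1 ↑n ↑m := by
      show φt ↑m * (φt (↑n*↑m))⁻¹ * φt ↑n = F1 ↑n ↑m
      have hc : (↑n * ↑m : G) = ↑(n*m) := rfl
      rw [hc, hφtN, hφtN, hφtN]
      exact (hφ n m).symm
    rw [h1, mul_inv_cancel]
  obtain ⟨x2, hx2⟩ := Stmt11Aux.core N hcyc hperf F2 ⟨hF2coc, hF2a, hF2b⟩ hF2N
  refine ⟨fun g => x2 g * φt g * cN, ?_⟩
  intro g h
  have e2 : F g h = F2 g h * Dm g h * cN := by
    show F g h = F1 g h * (Dm g h)⁻¹ * Dm g h * cN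
    rw [inv_mul_cancel_right]
    show F g h = F g h * cN⁻¹ * cN
    rw [inv_mul_cancel_right]
  rw [e2, hx2 g h]
  show (x2 h * (x2 (g*h))⁻¹ * x2 g) * (φt h * (φt (g*h))⁻¹ * φt g) * cN
      = (x2 h * φt h * cN) * ((x2 (g*h) * φt (g*h) * cN))⁻¹ * (x2 g * φt g * cN)
  ext; push_cast; field_simp
end
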